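/- Let q be a prime power with q ≡ 1 (mod 4) and let n be the integer with n - 1 = (q-1)/5 (assuming 5 divides q-1). Then C_5 + C_n ≠ F_q; that is, not every element of F_q is the sum of a 5-potent and an n-potent. -/
import Mathlib

open Finset Polynomial

lemma card_pow_eq_self_le {F : Type*} [Field F] [Fintype F] [DecidableEq F]
    (k : ℕ) (hk : 2 ≤ k) :
    (Finset.univ.filter fun x : F => x ^ k = x).card ≤ k := by
  have hd : (X ^ k - X : F[X]).natDegree = k := by
    rw [natDegree_sub_eq_left_of_natDegree_lt] <;> simp [natDegree_X_pow]
    omega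
  have hp : (X ^ k - X : F[X]) ≠ 0 := by
    intro h
    rw [h] at hd
    simp at hd; omega
  have hsub : (Finset.univ.filter fun x : F => x ^ k = x) ⊆ (X ^ k - X : F[X]).roots.toFinset := by
    intro x hx
    simp only [Finset.mem_filter] at hx
    rw [Multiset.mem_toFinset, mem_roots hp]
    simp [IsRoot, sub_eq_zero, hx.2]
  calc (Finset.univ.filter fun x : F => x ^ k = x).card
      ≤ (X ^ k - X : F[X]).roots.toFinset.card := Finset.card_le_card hsub
    _ ≤ Multiset.card (X ^ k - X : F[X]).roots := Multiset.toFinset_card_le _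
    _ ≤ (X ^ k - X : F[X]).natDegree := card_roots' _
    _ = k := hd

/-- If `q ≡ 1 (mod 4)` is a prime power, `5 ∣ q - 1`, and `n - 1 = (q-1)/5`, then not every
element of the finite field with `q` elements is the sum of a `5`-potent and an
`n`-potent. -/
theorem not_sum_of_five_potent_and_n_potent_d_eq_five
    (q n : ℕ) (hq : IsPrimePow q) (hq4 : q % 4 = 1) (h5 : 5 ∣ q - 1)
    (hn : n = (q - 1) / 5 + 1)
    (F : Type*) [Field F] [Fintype F] (hF : Fintype.card F = q) :
    ¬ (∀ γ : F, ∃ a b : F, a ^ 5 = a ∧ b ^ n = b ∧ a + b = γ) := by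
  classical
  intro h
  -- arithmetic facts
  have hq2 : 2 ≤ q := hq.two_le
  have hq6 : 6 ≤ q := by
    obtain ⟨m, hm⟩ := h5
    omega
  have h4 : 4 ∣ q - 1 := by omega
  obtain ⟨m, hm⟩ := h5
  have h4m : 4 ∣ m := by
    have : (4 : ℕ).Coprime 5 := by decide
    exact (Nat.Coprime.dvd_of_dvd_mul_left this (by omega : 4 ∣ 5 * m))
  obtain ⟨k, hk⟩ := h4m
  have hnm : n = 4 * k + 1 := by
    have : (q - 1) / 5 = m := by omega
    omega
  have hn2 : 2 ≤ n := by
    have : 5 ≤ q - 1 := by omega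
    omega
  have h5n : 5 * n = q + 4 := by omega
  -- char ≠ 2 facts
  have hchar : ringChar F ≠ 2 := by
    intro hc
    have := (FiniteField.even_card_iff_char_two (F := F)).mp hc
    rw [hF] at this
    omega
  have h2 : (2 : F) ≠ 0 := Ring.two_ne_zero hchar
  have hneg1 : (-1 : F) ≠ 1 := Ring.neg_one_ne_one_of_char_ne_two hchar
  -- square root of -1
  obtain ⟨i, hi⟩ : ∃ i : F, i * i = -1 := by
    have hs : IsSquare (-1 : F) := by
      rw [FiniteField.isSquare_neg_one_iff, hF]
      omega
    obtain ⟨i, hi⟩ := hs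
    exact ⟨i, hi.symm⟩
  have hi2 : i ^ 2 = -1 := by rw [sq]; exact hi
  have hi4 : i ^ 4 = 1 := by
    have : i ^ 4 = (i ^ 2) ^ 2 := by ring
    rw [this, hi2]; ring
  -- distinctness
  have hi0 : i ≠ 0 := by
    intro h0; rw [h0] at hi; simp at hi
  have hi1 : i ≠ 1 := by
    intro h1; rw [h1] at hi; simp at hi
    exact hneg1 hi.symm
  have him1 : i ≠ -1 := by
    intro h1; rw [h1] at hi
    have : (1 : F) = -1 := by rw [← hi]; ring
    exact hneg1 this.symm
  have hii : i ≠ -i := by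
    intro he
    have : 2 * i = 0 := by rw [two_mul]; nth_rewrite 1 [he]; ring
    rcases mul_eq_zero.mp this with h' | h'
    · exact h2 h'
    · exact hi0 h'
  have e01 : (0:F) ≠ 1 := zero_ne_one
  have e0m1 : (0:F) ≠ -1 := fun h => one_ne_zero (neg_eq_zero.mp h.symm)
  have e0i : (0:F) ≠ i := Ne.symm hi0
  have e0mi : (0:F) ≠ -i := fun h => hi0 (neg_eq_zero.mp h.symm)
  have e1m1 : (1:F) ≠ -1 := Ne.symm hneg1
  have e1i : (1:F) ≠ i := Ne.symm hi1
  have e1mi : (1:F) ≠ -i := fun h => him1 (by rw [← neg_neg i, ← h])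
  have em1i : (-1:F) ≠ i := Ne.symm him1
  have em1mi : (-1:F) ≠ -i := fun h => hi1 (neg_inj.mp h).symm
  -- powers
  have hpow5 : ∀ x ∈ ({0, 1, -1, i, -i} : Finset F), x ^ 5 = x := by
    intro x hx
    simp only [Finset.mem_insert, Finset.mem_singleton] at hx
    have hi5 : i ^ 5 = i := by
      have : i ^ 5 = i ^ 4 * i := by ring
      rw [this, hi4, one_mul]
    rcases hx with rfl | rfl | rfl | rfl | rfl
    · simp
    · simp
    · ring
    · exact hi5
    · rw [show (-i) ^ 5 = -(i^5) by ring, hi5]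
  have hin : i ^ n = i := by
    rw [hnm, pow_succ, pow_mul, hi4, one_pow, one_mul]
  have hpown : ∀ x ∈ ({0, 1, -1, i, -i} : Finset F), x ^ n = x := by
    intro x hx
    simp only [Finset.mem_insert, Finset.mem_singleton] at hx
    have hodd : Odd n := by rw [hnm]; exact ⟨2 * k, by ring⟩
    rcases hx with rfl | rfl | rfl | rfl | rfl
    · exact zero_pow (by omega)
    · simp
    · exact hodd.neg_one_pow
    · exact hin
    · rw [hodd.neg_pow, hin]
  -- the finsets
  set S5 : Finset F := Finset.univ.filter (fun x => x ^ 5 = x) with hS5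
  set Sn : Finset F := Finset.univ.filter (fun x => x ^ n = x) with hSn
  set T : Finset F := {0, 1, -1, i, -i} with hT
  have hmemS5 : ∀ x ∈ T, x ∈ S5 := by
    intro x hx; simp only [hS5, Finset.mem_filter, Finset.mem_univ, true_and]; exact hpow5 x hx
  have hmemSn : ∀ x ∈ T, x ∈ Sn := by
    intro x hx; simp only [hSn, Finset.mem_filter, Finset.mem_univ, true_and]; exact hpown x hx
  have hTmem : ∀ x : F, x ∈ T ↔ (x = 0 ∨ x = 1 ∨ x = -1 ∨ x = i ∨ x = -i) := by
    intro x; simp [hT]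
  have hnegT : ∀ x ∈ T, -x ∈ T := by
    intro x hx
    rw [hTmem] at hx ⊢
    rcases hx with rfl | rfl | rfl | rfl | rfl
    · left; ring
    · right; right; left; rfl
    · right; left; ring
    · right; right; right; right; rfl
    · right; right; right; left; ring
  have hTcard : T.card = 5 := by
    rw [hT]
    rw [Finset.card_insert_of_notMem (by simp [e01, e0m1, e0i, e0mi])]
    rw [Finset.card_insert_of_notMem (by simp [e1m1, e1i, e1mi])]
    rw [Finset.card_insert_of_notMem (by simp [em1i, em1mi])]
    rw [Finset.card_insert_of_notMem (by simp [hii])]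
    simp
  -- fibers
  set P : Finset (F × F) := S5 ×ˢ Sn with hP
  set fib : F → Finset (F × F) := fun γ => P.filter (fun p => p.1 + p.2 = γ) with hfib
  have hsum : ∑ γ : F, (fib γ).card = P.card :=
    (Finset.card_eq_sum_card_fiberwise (f := fun p : F × F => p.1 + p.2)
      (t := Finset.univ) (fun x _ => Finset.mem_univ _)).symm
  -- upper bound
  have hPcard : P.card ≤ q + 4 := by
    rw [hP, Finset.card_product]
    calc S5.card * Sn.card ≤ 5 * n :=
          Nat.mul_le_mul (card_pow_eq_self_le 5 (by omega)) (card_pow_eq_self_le n hn2)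
      _ = q + 4 := h5n
  -- lower bound on fiber of 0
  have hfib0 : 5 ≤ (fib 0).card := by
    have hsub : T.image (fun x => (x, -x)) ⊆ fib 0 := by
      intro p hp
      simp only [Finset.mem_image] at hp
      obtain ⟨x, hx, rfl⟩ := hp
      simp only [hfib, Finset.mem_filter, hP, Finset.mem_product]
      exact ⟨⟨hmemS5 x hx, hmemSn _ (hnegT x hx)⟩, by ring⟩
    have : (T.image (fun x => (x, -x))).card = 5 := by
      rw [Finset.card_image_of_injective _ (fun a b hab => (Prod.ext_iff.mp hab).1), hTcard]
    rw [← this]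
    exact Finset.card_le_card hsub
  -- lower bound on fibers of nonzero elements of T
  have hfibt : ∀ t ∈ T, t ≠ 0 → 2 ≤ (fib t).card := by
    intro t ht ht0
    have h0T : (0 : F) ∈ T := by rw [hTmem]; left; rfl
    have hsub : ({(t, 0), (0, t)} : Finset (F × F)) ⊆ fib t := by
      intro p hp
      simp only [Finset.mem_insert, Finset.mem_singleton] at hp
      rcases hp with rfl | rfl <;>
        simp only [hfib, Finset.mem_filter, hP, Finset.mem_product] <;>
        exact ⟨⟨hmemS5 _ (by assumption), hmemSn _ (by assumption)⟩, by ring⟩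
    have hne : ((t, 0) : F × F) ≠ (0, t) := by
      intro he
      exact ht0 (Prod.ext_iff.mp he).1
    have : ({(t, 0), (0, t)} : Finset (F × F)).card = 2 := by
      rw [Finset.card_insert_of_notMem (by simpa using hne), Finset.card_singleton]
    rw [← this]
    exact Finset.card_le_card hsub
  -- lower bound on all fibers
  have hfib1 : ∀ γ : F, 1 ≤ (fib γ).card := by
    intro γ
    obtain ⟨a, b, ha, hb, hab⟩ := h γ
    have : (a, b) ∈ fib γ := by
      simp only [hfib, Finset.mem_filter, hP, Finset.mem_product, hS5, hSn]
      simp [ha, hb, hab]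
    exact Finset.card_pos.mpr ⟨(a, b), this⟩
  -- sum over T
  have hsumT : 13 ≤ ∑ γ ∈ T, (fib γ).card := by
    have h1T : (1 : F) ∈ T := by rw [hTmem]; right; left; rfl
    have hm1T : (-1 : F) ∈ T := by rw [hTmem]; right; right; left; rfl
    have hiT : i ∈ T := by rw [hTmem]; right; right; right; left; rfl
    have hmiT : -i ∈ T := by rw [hTmem]; right; right; right; right; rfl
    rw [hT]
    rw [Finset.sum_insert (by simp [e01, e0m1, e0i, e0mi])]
    rw [Finset.sum_insert (by simp [e1m1, e1i, e1mi])]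
    rw [Finset.sum_insert (by simp [em1i, em1mi])]
    rw [Finset.sum_insert (by simp [hii])]
    rw [Finset.sum_singleton]
    have b0 := hfib0
    have b1 := hfibt 1 h1T one_ne_zero
    have b2 := hfibt (-1) hm1T (neg_ne_zero.mpr one_ne_zero)
    have b3 := hfibt i hiT hi0
    have b4 := hfibt (-i) hmiT (neg_ne_zero.mpr hi0)
    omega
  -- sum over complement
  have hsumC : q - 5 ≤ ∑ γ ∈ Finset.univ \ T, (fib γ).card := by
    have hcard : (Finset.univ \ T).card = q - 5 := by
      rw [Finset.card_sdiff_of_subset (Finset.subset_univ _), Finset.card_univ, hF, hTcard]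
    calc q - 5 = ∑ _γ ∈ Finset.univ \ T, 1 := by rw [Finset.sum_const, smul_eq_mul, mul_one, hcard]
      _ ≤ ∑ γ ∈ Finset.univ \ T, (fib γ).card := Finset.sum_le_sum (fun γ _ => hfib1 γ)
  -- combine
  have hsplit : ∑ γ ∈ Finset.univ \ T, (fib γ).card + ∑ γ ∈ T, (fib γ).card
      = ∑ γ : F, (fib γ).card := Finset.sum_sdiff (Finset.subset_univ T)
  omega
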